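/- arXiv:2204.07080 — 4 statements merged into one kernel-verified Lean document; each statement's English description precedes it below -/
import Mathlib

section
/- Consider the Frank-Wolfe iteration on a compact convex set K ⊆ ℝⁿ for a convex differentiable function f with L-Lipschitz gradient: given y⁰ ∈ K, set ȳᵏ ∈ argmin_{y ∈ K} ⟨∇f(yᵏ), y⟩ and yᵏ⁺¹ = (1 − ωₖ) yᵏ + ωₖ ȳᵏ with ωₖ = 2/(k+2). Then for all k ≥ 1, f(yᵏ) − min_{y ∈ K} f(y) ≤ 2 L D² / (k+1), where D is the diameter of K. -/
open RealInnerProductSpace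

variable {n : ℕ}

section FWaux

lemma fw_path_hasDerivAt (f : EuclideanSpace ℝ (Fin n) → ℝ) (p v : EuclideanSpace ℝ (Fin n))
    (t : ℝ) (hd : DifferentiableAt ℝ f (p + t • v)) :
    HasDerivAt (fun s : ℝ => f (p + s • v)) ⟪gradient f (p + t • v), v⟫ t := by
  have hpath : HasDerivAt (fun s : ℝ => p + s • v) v t := by
    simpa using ((hasDerivAt_id t).smul_const v).const_add p
  have hf := hd.hasGradientAt
  rw [hasGradientAt_iff_hasFDerivAt] at hf
  have := hf.comp_hasDerivAt t hpath
  simp at this ⊢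
  exact this

lemma fw_comb_eq (x z : EuclideanSpace ℝ (Fin n)) (t : ℝ) :
    (1 - t) • x + t • z = x + t • (z - x) := by
  rw [sub_smul, one_smul, smul_sub]; abel

lemma fw_grad_ineq (f : EuclideanSpace ℝ (Fin n) → ℝ) (K : Set (EuclideanSpace ℝ (Fin n)))
    (hconv : ConvexOn ℝ K f) {x z : EuclideanSpace ℝ (Fin n)}
    (hx : x ∈ K) (hz : z ∈ K) (hd : DifferentiableAt ℝ f x) :
    ⟪gradient f x, z - x⟫ ≤ f z - f x := by
  set φ : ℝ → ℝ := fun s => f (x + s • (z - x)) with hφ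
  have hder : HasDerivAt φ ⟪gradient f x, z - x⟫ 0 := by
    have := fw_path_hasDerivAt f x (z - x) 0 (by simpa using hd)
    simpa using this
  have htend : Filter.Tendsto (slope φ 0) (nhdsWithin 0 (Set.Ioi 0))
      (nhds ⟪gradient f x, z - x⟫) :=
    (hasDerivAt_iff_tendsto_slope.mp hder).mono_left
      (nhdsWithin_mono _ (fun t ht => ne_of_gt ht))
  refine le_of_tendsto htend ?_
  filter_upwards [Ioo_mem_nhdsGT_of_mem (Set.mem_Ico.mpr ⟨le_refl (0:ℝ), zero_lt_one⟩)]
    with t ht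
  obtain ⟨ht0, ht1⟩ := ht
  have hcomb : φ t ≤ (1 - t) * f x + t * f z := by
    have := hconv.2 hx hz (by linarith : (0:ℝ) ≤ 1 - t) ht0.le (by ring)
    rw [fw_comb_eq] at this
    simpa [hφ] using this
  have hs : slope φ 0 t = (φ t - φ 0) / t := by simp [slope_def_field]
  rw [hs, div_le_iff₀ ht0]
  have hφ0 : φ 0 = f x := by simp [hφ]
  rw [hφ0]; nlinarith [hcomb]

lemma fw_descent (f : EuclideanSpace ℝ (Fin n) → ℝ) (K : Set (EuclideanSpace ℝ (Fin n)))
    (L : ℝ) (hKconv : Convex ℝ K)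
    (hdiff : ∀ x ∈ K, DifferentiableAt ℝ f x)
    (hlip : ∀ x ∈ K, ∀ y ∈ K, ‖gradient f x - gradient f y‖ ≤ L * ‖x - y‖)
    {x z : EuclideanSpace ℝ (Fin n)} (hx : x ∈ K) (hz : z ∈ K) :
    f z ≤ f x + ⟪gradient f x, z - x⟫ + L / 2 * ‖z - x‖ ^ 2 := by
  set v := z - x with hv
  have hseg : ∀ t : ℝ, t ∈ Set.Icc (0:ℝ) 1 → x + t • v ∈ K := fun t ht =>
    hKconv.add_smul_sub_mem hx hz ht
  set ψ : ℝ → ℝ := fun t => f (x + t • v) - t * ⟪gradient f x, v⟫ - L / 2 * ‖v‖ ^ 2 * t ^ 2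
    with hψ
  have hderiv : ∀ t ∈ Set.Icc (0:ℝ) 1, HasDerivAt ψ
      (⟪gradient f (x + t • v), v⟫ - ⟪gradient f x, v⟫ - L / 2 * ‖v‖ ^ 2 * (2 * t)) t := by
    intro t ht
    have h1 := fw_path_hasDerivAt f x v t (hdiff _ (hseg t ht))
    have h2 : HasDerivAt (fun t : ℝ => t * ⟪gradient f x, v⟫) ⟪gradient f x, v⟫ t := by
      simpa using (hasDerivAt_id t).mul_const ⟪gradient f x, v⟫
    have h3 : HasDerivAt (fun t : ℝ => L / 2 * ‖v‖ ^ 2 * t ^ 2)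
        (L / 2 * ‖v‖ ^ 2 * (2 * t)) t := by
      simpa [mul_comm] using ((hasDerivAt_pow 2 t).const_mul (L / 2 * ‖v‖ ^ 2))
    exact (h1.sub h2).sub h3
  have hanti : AntitoneOn ψ (Set.Icc (0:ℝ) 1) := by
    apply antitoneOn_of_deriv_nonpos (convex_Icc 0 1)
    · intro t ht
      exact (hderiv t ht).continuousAt.continuousWithinAt
    · intro t ht
      rw [interior_Icc] at ht
      exact ((hderiv t (Set.mem_Icc_of_Ioo ht)).differentiableAt).differentiableWithinAt
    · intro t ht
      rw [interior_Icc] at ht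
      rw [(hderiv t (Set.mem_Icc_of_Ioo ht)).deriv]
      have hlipb : ‖gradient f (x + t • v) - gradient f x‖ ≤ L * (t * ‖v‖) := by
        have := hlip _ (hseg t (Set.mem_Icc_of_Ioo ht)) x hx
        have he : (x + t • v) - x = t • v := by abel
        rw [he] at this
        rwa [norm_smul, Real.norm_eq_abs, abs_of_pos ht.1] at this
      have hinner : ⟪gradient f (x + t • v), v⟫ - ⟪gradient f x, v⟫
          ≤ L * (t * ‖v‖) * ‖v‖ := by
        rw [← inner_sub_left]
        calc ⟪gradient f (x + t • v) - gradient f x, v⟫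
            ≤ ‖gradient f (x + t • v) - gradient f x‖ * ‖v‖ := real_inner_le_norm _ _
          _ ≤ L * (t * ‖v‖) * ‖v‖ :=
              mul_le_mul_of_nonneg_right hlipb (norm_nonneg _)
      nlinarith [hinner]
  have h01 := hanti (Set.left_mem_Icc.mpr zero_le_one) (Set.right_mem_Icc.mpr zero_le_one)
    zero_le_one
  have hψ0 : ψ 0 = f x := by simp [hψ]
  have hψ1 : ψ 1 = f z - ⟪gradient f x, v⟫ - L / 2 * ‖v‖ ^ 2 := by simp [hψ, hv]
  rw [hψ0, hψ1] at h01
  linarith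

end FWaux

theorem frank_wolfe_convergence
    {n : ℕ} (f : EuclideanSpace ℝ (Fin n) → ℝ)
    (K : Set (EuclideanSpace ℝ (Fin n))) (L : ℝ)
    (hKne : K.Nonempty) (hKcomp : IsCompact K) (hKconv : Convex ℝ K)
    (hconv : ConvexOn ℝ K f)
    (hdiff : ∀ x ∈ K, DifferentiableAt ℝ f x)
    (hlip : ∀ x ∈ K, ∀ y ∈ K, ‖gradient f x - gradient f y‖ ≤ L * ‖x - y‖)
    (y ybar : ℕ → EuclideanSpace ℝ (Fin n))
    (hy0 : y 0 ∈ K)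
    (hbar : ∀ k, ybar k ∈ K ∧
      ∀ z ∈ K, ⟪gradient f (y k), ybar k⟫ ≤ ⟪gradient f (y k), z⟫)
    (hupd : ∀ k, y (k + 1)
      = (1 - 2 / ((k : ℝ) + 2)) • y k + (2 / ((k : ℝ) + 2)) • ybar k) :
    ∀ k : ℕ, 1 ≤ k →
      f (y k) - sInf (f '' K) ≤ 2 * L * Metric.diam K ^ 2 / ((k : ℝ) + 1) := by
  -- all iterates stay in K
  have hωmem : ∀ k : ℕ, (0:ℝ) ≤ 2 / ((k:ℝ) + 2) ∧ 2 / ((k:ℝ) + 2) ≤ 1 := by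
    intro k
    have hk2 : (0:ℝ) < (k:ℝ) + 2 := by positivity
    constructor
    · positivity
    · rw [div_le_one hk2]; linarith [Nat.cast_nonneg (α := ℝ) k]
  have hyK : ∀ k, y k ∈ K := by
    intro k
    induction k with
    | zero => exact hy0
    | succ k ih =>
      rw [hupd k]
      exact hKconv ih (hbar k).1 (by linarith [(hωmem k).2]) (hωmem k).1 (by ring)
  by_cases hsub : K.Subsingleton
  · intro k hk
    have hKeq : K = {y 0} := hsub.eq_singleton_of_mem hy0
    have hyk : y k = y 0 := hsub (hyK k) hy0
    have himg : f '' K = {f (y 0)} := by rw [hKeq, Set.image_singleton]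
    have hdiam : Metric.diam K = 0 := Metric.diam_subsingleton hsub
    rw [hyk, himg, csInf_singleton, hdiam]
    simp
  · rw [Set.not_subsingleton_iff] at hsub
    obtain ⟨a, ha, b, hb, hab⟩ := hsub
    have hL : 0 ≤ L := by
      have h1 := hlip a ha b hb
      have h2 : 0 < ‖a - b‖ := by
        rw [norm_pos_iff]; exact sub_ne_zero.mpr hab
      nlinarith [norm_nonneg (gradient f a - gradient f b)]
    set D := Metric.diam K with hD
    set c := sInf (f '' K) with hc
    have hC : 0 ≤ L * D ^ 2 := by positivity
    -- the key recurrence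
    have hrec : ∀ k : ℕ, f (y (k+1)) - c ≤
        (1 - 2 / ((k:ℝ) + 2)) * (f (y k) - c) + L / 2 * (2 / ((k:ℝ) + 2))^2 * D^2 := by
      intro k
      set ω : ℝ := 2 / ((k:ℝ) + 2) with hω
      obtain ⟨hω0, hω1⟩ := hωmem k
      set g := gradient f (y k) with hg
      set d := ybar k - y k with hd
      have hdesc := fw_descent f K L hKconv hdiff hlip (hyK k) (hyK (k+1))
      have hdiffpt : y (k+1) - y k = ω • d := by
        rw [hupd k, hd, hω]
        module
      have hA : ⟪g, d⟫ ≤ c - f (y k) := by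
        have h1 : ∀ z ∈ K, f (y k) + ⟪g, d⟫ ≤ f z := by
          intro z hz
          have h2 := fw_grad_ineq f K hconv (hyK k) hz (hdiff _ (hyK k))
          have h3 := (hbar k).2 z hz
          have h4 : ⟪g, d⟫ ≤ ⟪g, z - y k⟫ := by
            rw [hd, inner_sub_right, inner_sub_right]
            linarith
          linarith
        have h5 : f (y k) + ⟪g, d⟫ ≤ c := by
          apply le_csInf (hKne.image f)
          rintro _ ⟨z, hz, rfl⟩
          exact h1 z hz
        linarith
      have hnorm : ‖d‖ ≤ D := by
        have := Metric.dist_le_diam_of_mem hKcomp.isBounded (hbar k).1 (hyK k)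
        rwa [dist_eq_norm] at this
      have hnorm2 : ‖d‖^2 ≤ D^2 := by nlinarith [norm_nonneg d]
      rw [hdiffpt] at hdesc
      rw [real_inner_smul_right] at hdesc
      rw [norm_smul, Real.norm_eq_abs, abs_of_nonneg hω0, mul_pow] at hdesc
      have h6 : ω * ⟪g, d⟫ ≤ ω * (c - f (y k)) := mul_le_mul_of_nonneg_left hA hω0
      have h7 : L / 2 * (ω^2 * ‖d‖^2) ≤ L / 2 * (ω^2 * D^2) := by
        apply mul_le_mul_of_nonneg_left _ (by linarith)
        exact mul_le_mul_of_nonneg_left hnorm2 (by positivity)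
      nlinarith [hdesc]
    -- induction
    intro k hk
    induction k with
    | zero => omega
    | succ k ih =>
      rcases Nat.eq_or_lt_of_le hk with h1 | h1
      · -- k + 1 = 1, i.e. k = 0
        have hk0 : k = 0 := by omega
        subst hk0
        have h := hrec 0
        norm_num at h ⊢
        linarith
      · have hk1 : 1 ≤ k := by omega
        have IH := ih hk1
        have h := hrec k
        set t : ℝ := (k : ℝ) with ht
        have ht0 : (0:ℝ) ≤ t := Nat.cast_nonneg k
        have ht1 : (0:ℝ) < t + 1 := by linarith
        have ht2 : (0:ℝ) < t + 2 := by linarith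
        obtain ⟨hω0, hω1⟩ := hωmem k
        have h8 : (1 - 2/(t+2)) * (f (y k) - c) ≤ (1 - 2/(t+2)) * (2 * L * D^2 / (t+1)) :=
          mul_le_mul_of_nonneg_left IH (by linarith)
        have halg : 2 * L * D^2 / (t+2) -
            ((1 - 2/(t+2)) * (2 * L * D^2 / (t+1)) + L / 2 * (2/(t+2))^2 * D^2)
            = 2 * (L * D^2) / ((t+1) * (t+2)^2) := by
          field_simp
          ring
        have hpos : 0 ≤ 2 * (L * D^2) / ((t+1) * (t+2)^2) := by positivity
        have hgoal : f (y (k+1)) - c ≤ 2 * L * D^2 / (t+2) := by linarith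
        have hcast : ((k+1 : ℕ) : ℝ) + 1 = t + 2 := by push_cast; ring
        rw [hcast]
        exact hgoal
end

section
/- (Shapley–Folkman / Starr.) Let Y₁, …, Y_N be nonempty compact subsets of ℝᵈ with N > d, and let Y = ∑_{i=1}^N Y_i. Then every point y ∈ conv(Y) can be written as y = ∑_{i=1}^N y_i with y_i ∈ conv(Y_i) for all i and y_i ∈ Y_i for all but at most d indices i. -/
open Pointwise

/-- Any point of a convex hull is a finite convex combination indexed by a
finset of points of the set itself. -/
lemma sf_exists_finset_rep {E : Type*} [AddCommGroup E] [Module ℝ E]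
    (s : Set E) (x : E) (hx : x ∈ convexHull ℝ s) :
    ∃ (A : Finset E) (w : E → ℝ), ↑A ⊆ s ∧ (∀ a ∈ A, 0 ≤ w a) ∧
      ∑ a ∈ A, w a = 1 ∧ ∑ a ∈ A, w a • a = x := by
  classical
  obtain ⟨ι, _, w, z, hw0, hw1, hz, hzx⟩ := mem_convexHull_iff_exists_fintype.mp hx
  refine ⟨Finset.univ.image z, fun a => ∑ j ∈ Finset.univ.filter (fun j => z j = a), w j,
    ?_, ?_, ?_, ?_⟩
  · intro a ha
    simp only [Finset.coe_image, Set.mem_image] at ha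
    obtain ⟨j, _, rfl⟩ := ha
    exact hz j
  · intro a _
    exact Finset.sum_nonneg fun j _ => hw0 j
  · rw [Finset.sum_fiberwise_of_maps_to (fun j _ => Finset.mem_image_of_mem z (Finset.mem_univ j)) w]
    exact hw1
  · rw [← hzx, ← Finset.sum_fiberwise_of_maps_to
      (fun j _ => Finset.mem_image_of_mem z (Finset.mem_univ j)) (fun j => w j • z j)]
    refine Finset.sum_congr rfl fun a _ => ?_
    rw [Finset.sum_smul]
    refine Finset.sum_congr rfl fun j hj => ?_
    rw [(Finset.mem_filter.mp hj).2]

/-- The key reduction step (conic Carathéodory): any nonnegative representation can be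
reduced to one supported on at most `N + d` pairs, preserving all row sums and the
weighted sum of the points. -/
lemma sf_reduce (d N : ℕ) (n : ℕ) :
    ∀ (T : Finset (Fin N × EuclideanSpace ℝ (Fin d))), T.card = n →
    ∀ (μ : Fin N × EuclideanSpace ℝ (Fin d) → ℝ), (∀ p ∈ T, 0 ≤ μ p) →
    ∃ T' ⊆ T, T'.card ≤ N + d ∧
      ∃ μ' : Fin N × EuclideanSpace ℝ (Fin d) → ℝ,
        (∀ p ∈ T', 0 ≤ μ' p) ∧
        (∀ i, ∑ p ∈ T'.filter (fun p => p.1 = i), μ' p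
            = ∑ p ∈ T.filter (fun p => p.1 = i), μ p) ∧
        (∑ p ∈ T', μ' p • p.2 = ∑ p ∈ T, μ p • p.2) := by
  classical
  induction n using Nat.strong_induction_on with
  | _ n ih =>
  intro T hTn μ hμ
  by_cases hc : T.card ≤ N + d
  · exact ⟨T, subset_rfl, hc, μ, hμ, fun i => rfl, rfl⟩
  push_neg at hc
  -- the vectors (p.2, e_{p.1}) indexed by T are linearly dependent
  set v : Fin N × EuclideanSpace ℝ (Fin d) → EuclideanSpace ℝ (Fin d) × (Fin N → ℝ) :=
    fun p => (p.2, Pi.single p.1 1) with hv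
  have hfr : Module.finrank ℝ (EuclideanSpace ℝ (Fin d) × (Fin N → ℝ)) = d + N := by
    rw [Module.finrank_prod, finrank_euclideanSpace_fin, Module.finrank_pi, Fintype.card_fin]
  have hnli : ¬ LinearIndependent ℝ (fun p : ↥T => v p) := by
    intro h
    have := h.fintype_card_le_finrank
    rw [Fintype.card_coe, hfr] at this
    omega
  obtain ⟨g, hg0, q, hgq⟩ := Fintype.not_linearIndependent_iff.mp hnli
  set c0 : Fin N × EuclideanSpace ℝ (Fin d) → ℝ :=
    fun p => if h : p ∈ T then g ⟨p, h⟩ else 0 with hc0def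
  have hc0sum : ∑ p ∈ T, c0 p • v p = 0 := by
    rw [← Finset.sum_attach T (fun p => c0 p • v p)]
    rw [Finset.univ_eq_attach] at hg0
    rw [← hg0]
    refine Finset.sum_congr rfl fun x _ => ?_
    simp [hc0def, x.2]
  -- extract the two components and ensure some coefficient is positive
  have key : ∀ c : Fin N × EuclideanSpace ℝ (Fin d) → ℝ,
      (∑ p ∈ T, c p • v p = 0) →
      ((∑ p ∈ T, c p • p.2 = 0) ∧
        ∀ i, ∑ p ∈ T.filter (fun p => p.1 = i), c p = 0) := by
    intro c hc
    constructor
    · have h1 := congrArg Prod.fst hc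
      simpa [Prod.fst_sum] using h1
    · intro i
      have h2 := congrArg (fun w => w.2 i) hc
      simp only [Prod.snd_sum, Finset.sum_apply] at h2
      rw [Finset.sum_filter]
      calc (∑ p ∈ T, if p.1 = i then c p else 0)
          = ∑ p ∈ T, (c p • v p).2 i := by
            refine Finset.sum_congr rfl fun p _ => ?_
            simp only [hv, Prod.smul_snd, Pi.smul_apply, Pi.single_apply, smul_eq_mul]
            by_cases hpi : p.1 = i
            · simp [hpi]
            · simp [hpi, Ne.symm hpi]
        _ = 0 := by simpa using h2
  obtain ⟨c, hcpt, hcrow, p₁, hp₁T, hp₁pos⟩ :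
      ∃ c : Fin N × EuclideanSpace ℝ (Fin d) → ℝ,
        (∑ p ∈ T, c p • p.2 = 0) ∧
        (∀ i, ∑ p ∈ T.filter (fun p => p.1 = i), c p = 0) ∧
        ∃ p₁ ∈ T, 0 < c p₁ := by
    have hq0 : c0 q.1 ≠ 0 := by
      simpa [hc0def, q.2] using hgq
    rcases hq0.lt_or_gt with h | h
    · have hneg : ∑ p ∈ T, (-c0) p • v p = 0 := by
        simp only [Pi.neg_apply, neg_smul, Finset.sum_neg_distrib, hc0sum, neg_zero]
      obtain ⟨h1, h2⟩ := key (-c0) hneg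
      exact ⟨-c0, h1, h2, q.1, q.2, by simpa using h⟩
    · obtain ⟨h1, h2⟩ := key c0 hc0sum
      exact ⟨c0, h1, h2, q.1, q.2, h⟩
  -- find the element to be removed
  set P := T.filter (fun p => 0 < c p) with hP
  have hPne : P.Nonempty := ⟨p₁, Finset.mem_filter.mpr ⟨hp₁T, hp₁pos⟩⟩
  obtain ⟨p₀, hp₀P, hmin⟩ := P.exists_min_image (fun p => μ p / c p) hPne
  have hp₀T : p₀ ∈ T := (Finset.mem_filter.mp hp₀P).1
  have hcp₀ : 0 < c p₀ := (Finset.mem_filter.mp hp₀P).2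
  set t := μ p₀ / c p₀ with ht
  have ht0 : 0 ≤ t := div_nonneg (hμ p₀ hp₀T) hcp₀.le
  set ν : Fin N × EuclideanSpace ℝ (Fin d) → ℝ := fun p => μ p - t * c p with hν
  have hνp₀ : ν p₀ = 0 := by
    simp only [hν, ht]
    field_simp
    ring
  have hνnn : ∀ p ∈ T, 0 ≤ ν p := by
    intro p hp
    by_cases hcp : 0 < c p
    · have hmem : p ∈ P := Finset.mem_filter.mpr ⟨hp, hcp⟩
      have := hmin p hmem
      have h2 : t * c p ≤ μ p := by
        rw [ht]
        calc μ p₀ / c p₀ * c p ≤ μ p / c p * c p := by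
              exact mul_le_mul_of_nonneg_right this hcp.le
          _ = μ p := div_mul_cancel₀ _ hcp.ne'
      simp only [hν, sub_nonneg]
      exact h2
    · push_neg at hcp
      have : t * c p ≤ 0 := mul_nonpos_of_nonneg_of_nonpos ht0 hcp
      have := hμ p hp
      simp only [hν, sub_nonneg]
      nlinarith
  have hνrow : ∀ i, ∑ p ∈ T.filter (fun p => p.1 = i), ν p
      = ∑ p ∈ T.filter (fun p => p.1 = i), μ p := by
    intro i
    simp only [hν, Finset.sum_sub_distrib, ← Finset.mul_sum, hcrow i, mul_zero, sub_zero]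
  have hνpt : ∑ p ∈ T, ν p • p.2 = ∑ p ∈ T, μ p • p.2 := by
    simp only [hν, sub_smul, Finset.sum_sub_distrib, mul_smul, ← Finset.smul_sum, hcpt,
      smul_zero, sub_zero]
  -- recurse on T minus p₀
  have hcard : (T.erase p₀).card < n := by
    rw [Finset.card_erase_of_mem hp₀T]
    omega
  obtain ⟨T', hT'sub, hT'card, μ', hμ'nn, hμ'row, hμ'pt⟩ :=
    ih (T.erase p₀).card hcard (T.erase p₀) rfl ν (fun p hp => hνnn p (Finset.mem_of_mem_erase hp))
  refine ⟨T', hT'sub.trans (Finset.erase_subset _ _), hT'card, μ', hμ'nn, ?_, ?_⟩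
  · intro i
    rw [hμ'row i, ← hνrow i, Finset.filter_erase]
    exact Finset.sum_erase _ hνp₀
  · rw [hμ'pt, ← hνpt]
    exact Finset.sum_erase _ (by rw [hνp₀, zero_smul])

theorem shapley_folkman
    (d N : ℕ) (hdN : d < N)
    (Y : Fin N → Set (EuclideanSpace ℝ (Fin d)))
    (hne : ∀ i, (Y i).Nonempty) (hcomp : ∀ i, IsCompact (Y i)) :
    ∀ y ∈ convexHull ℝ (∑ i, Y i),
      ∃ z : Fin N → EuclideanSpace ℝ (Fin d),
        y = ∑ i, z i ∧ (∀ i, z i ∈ convexHull ℝ (Y i)) ∧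
        ∃ B : Finset (Fin N), B.card ≤ d ∧ ∀ i ∉ B, z i ∈ Y i := by
  classical
  intro y hy
  rw [convexHull_sum] at hy
  rw [Set.mem_fintype_sum] at hy
  obtain ⟨g, hg, hgy⟩ := hy
  -- get finite convex representations of each g i
  have hrep := fun i => sf_exists_finset_rep (Y i) (g i) (hg i)
  choose A w hA hw0 hw1 hwg using hrep
  -- assemble global data
  set T : Finset (Fin N × EuclideanSpace ℝ (Fin d)) :=
    Finset.univ.biUnion (fun i => (A i).image (fun x => (i, x))) with hT
  set μ : Fin N × EuclideanSpace ℝ (Fin d) → ℝ :=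
    fun p => if p.2 ∈ A p.1 then w p.1 p.2 else 0 with hμ
  have hfilter : ∀ i, T.filter (fun p => p.1 = i) = (A i).image (fun x => (i, x)) := by
    intro i
    ext p
    simp only [hT, Finset.mem_filter, Finset.mem_biUnion, Finset.mem_univ, true_and,
      Finset.mem_image]
    constructor
    · rintro ⟨⟨j, x, hx, rfl⟩, rfl⟩
      exact ⟨x, hx, rfl⟩
    · rintro ⟨x, hx, rfl⟩
      exact ⟨⟨i, x, hx, rfl⟩, rfl⟩
  have hinj : ∀ i : Fin N, ∀ x ∈ A i, ∀ y ∈ A i,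
      (i, x) = ((i, y) : Fin N × EuclideanSpace ℝ (Fin d)) → x = y := by
    intro i x _ y _ h
    exact congrArg Prod.snd h
  have hμnn : ∀ p ∈ T, 0 ≤ μ p := by
    intro p hp
    simp only [hT, Finset.mem_biUnion, Finset.mem_univ, true_and, Finset.mem_image] at hp
    obtain ⟨j, x, hx, rfl⟩ := hp
    simpa [hμ, hx] using hw0 j x hx
  have hrow : ∀ i, ∑ p ∈ T.filter (fun p => p.1 = i), μ p = 1 := by
    intro i
    rw [hfilter i, Finset.sum_image (hinj i)]
    rw [← hw1 i]
    refine Finset.sum_congr rfl fun x hx => ?_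
    simp [hμ, hx]
  have hpt : ∑ p ∈ T, μ p • p.2 = y := by
    rw [← Finset.sum_fiberwise_of_maps_to (g := Prod.fst)
      (fun p _ => Finset.mem_univ p.1) (fun p => μ p • p.2)]
    rw [← hgy]
    refine Finset.sum_congr rfl fun i _ => ?_
    rw [hfilter i, Finset.sum_image (hinj i), ← hwg i]
    refine Finset.sum_congr rfl fun x hx => ?_
    simp [hμ, hx]
  have hmemY : ∀ p ∈ T, p.2 ∈ Y p.1 := by
    intro p hp
    simp only [hT, Finset.mem_biUnion, Finset.mem_univ, true_and, Finset.mem_image] at hp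
    obtain ⟨j, x, hx, rfl⟩ := hp
    exact hA j hx
  -- reduce
  obtain ⟨T', hT'sub, hT'card, μ', hμ'nn, hμ'row, hμ'pt⟩ :=
    sf_reduce d N T.card T rfl μ hμnn
  have hrow' : ∀ i, ∑ p ∈ T'.filter (fun p => p.1 = i), μ' p = 1 :=
    fun i => (hμ'row i).trans (hrow i)
  have hpt' : ∑ p ∈ T', μ' p • p.2 = y := hμ'pt.trans hpt
  have hmemY' : ∀ p ∈ T', p.2 ∈ Y p.1 := fun p hp => hmemY p (hT'sub hp)
  refine ⟨fun i => ∑ p ∈ T'.filter (fun p => p.1 = i), μ' p • p.2, ?_, ?_, ?_⟩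
  · rw [← hpt']
    exact (Finset.sum_fiberwise_of_maps_to (g := Prod.fst)
      (fun p _ => Finset.mem_univ p.1) (fun p => μ' p • p.2)).symm
  · intro i
    show ∑ p ∈ T'.filter (fun p => p.1 = i), μ' p • p.2 ∈ convexHull ℝ (Y i)
    rw [show (∑ p ∈ T'.filter (fun p => p.1 = i), μ' p • p.2)
        = (T'.filter (fun p => p.1 = i)).centerMass μ' Prod.snd from
      (Finset.centerMass_eq_of_sum_1 _ _ (hrow' i)).symm]
    refine Finset.centerMass_mem_convexHull _
      (fun p hp => hμ'nn p (Finset.mem_filter.mp hp).1) (by rw [hrow' i]; norm_num) ?_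
    intro p hp
    have h1 := hmemY' p (Finset.mem_filter.mp hp).1
    rwa [(Finset.mem_filter.mp hp).2] at h1
  · set k : Fin N → ℕ := fun i => (T'.filter (fun p => p.1 = i)).card with hk
    have hk1 : ∀ i, 1 ≤ k i := by
      intro i
      rw [hk, Nat.one_le_iff_ne_zero, Ne, Finset.card_eq_zero]
      intro hemp
      have := hrow' i
      rw [hemp, Finset.sum_empty] at this
      norm_num at this
    have hksum : ∑ i, k i ≤ N + d := by
      rw [hk, ← Finset.card_eq_sum_card_fiberwise (fun p _ => Finset.mem_univ p.1)]
      exact hT'card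
    refine ⟨Finset.univ.filter (fun i => 2 ≤ k i), ?_, ?_⟩
    · -- card bound
      set B := Finset.univ.filter (fun i => 2 ≤ k i) with hB
      have hsplit : ∑ i ∈ B, k i + ∑ i ∈ Finset.univ.filter (fun i => ¬ 2 ≤ k i), k i
          = ∑ i, k i := Finset.sum_filter_add_sum_filter_not _ _ _
      have h2 : 2 * B.card ≤ ∑ i ∈ B, k i := by
        rw [two_mul]
        calc B.card + B.card = ∑ _i ∈ B, 1 + ∑ _i ∈ B, 1 := by
              simp
          _ = ∑ i ∈ B, 2 := by rw [← Finset.sum_add_distrib]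
          _ ≤ ∑ i ∈ B, k i :=
              Finset.sum_le_sum fun i hi => (Finset.mem_filter.mp hi).2
      have h1 : (Finset.univ.filter (fun i => ¬ 2 ≤ k i)).card
          ≤ ∑ i ∈ Finset.univ.filter (fun i => ¬ 2 ≤ k i), k i := by
        calc (Finset.univ.filter (fun i => ¬ 2 ≤ k i)).card
            = ∑ _i ∈ Finset.univ.filter (fun i => ¬ 2 ≤ k i), 1 := by simp
          _ ≤ _ := Finset.sum_le_sum fun i _ => hk1 i
      have hBcompl : B.card + (Finset.univ.filter (fun i => ¬ 2 ≤ k i)).card = N := by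
        rw [hB, Finset.card_filter_add_card_filter_not, Finset.card_univ,
          Fintype.card_fin]
      have hle : 2 * B.card + (Finset.univ.filter (fun i => ¬ 2 ≤ k i)).card ≤ N + d := by
        calc 2 * B.card + (Finset.univ.filter (fun i => ¬ 2 ≤ k i)).card
            ≤ ∑ i ∈ B, k i + ∑ i ∈ Finset.univ.filter (fun i => ¬ 2 ≤ k i), k i :=
              add_le_add h2 h1
          _ = ∑ i, k i := hsplit
          _ ≤ N + d := hksum
      omega
    · intro i hi
      simp only [Finset.mem_filter, Finset.mem_univ, true_and, not_le] at hi
      have hki : (T'.filter (fun p => p.1 = i)).card = 1 := by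
        have h1i := hk1 i
        simp only [hk] at h1i hi
        omega
      show ∑ p ∈ T'.filter (fun p => p.1 = i), μ' p • p.2 ∈ Y i
      obtain ⟨p, hp⟩ := Finset.card_eq_one.mp hki
      have hμ'p : μ' p = 1 := by
        have := hrow' i
        rwa [hp, Finset.sum_singleton] at this
      have hpfil : p ∈ T'.filter (fun p => p.1 = i) := hp ▸ Finset.mem_singleton_self p
      have hpi : p.1 = i := (Finset.mem_filter.mp hpfil).2
      have hpY : p.2 ∈ Y i := hpi ▸ hmemY' p (Finset.mem_filter.mp hpfil).1
      rw [hp, Finset.sum_singleton, hμ'p, one_smul]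
      exact hpY
end

section
/- (Equivalence of the optimal control problem and its MICP formulation, easy direction.) Given a feasible state-control trajectory (s,u) for the finite-state optimal control problem, define m_i^t(z) = 1 if z = (s_i^t, u_i^t) and 0 otherwise, for each agent i, time t, and z ∈ Z_i^t = {(s,u) : u ∈ U_i^t(s)}. Then m satisfies the MICP constraints (integrality, nonnegativity, unit mass at each (i,t), zero mass on infeasible initial states, and the flow-conservation constraint ∑_{u ∈ U_i^θ(s)} m_i^θ(s,u) = ∑_{z ∈ (π_i^{θ−1})^{-1}(s)} m_i^{θ−1}(z)), and the MICP objective evaluated at m equals J(s,u). -/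
theorem micp_easy_direction
    {N T : ℕ} (hN : 0 < N)
    (S U : Fin N → Type*)
    [∀ i, Fintype (S i)] [∀ i, Fintype (U i)]
    [∀ i, DecidableEq (S i)] [∀ i, DecidableEq (U i)]
    (Uc : ∀ i : Fin N, ℕ → S i → Finset (U i))
    (π : ∀ i : Fin N, ℕ → S i → U i → S i)
    (S0 : ∀ i : Fin N, Finset (S i))
    (h ℓ : ∀ i : Fin N, ℕ → S i → U i → ℝ)
    (f : ℕ → ℝ → ℝ)
    -- the feasible state-control trajectory
    (s : ∀ i : Fin N, ℕ → S i) (u : ∀ i : Fin N, ℕ → U i)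
    (hs0 : ∀ i, s i 0 ∈ S0 i)
    (hu : ∀ i, ∀ t ≤ T, u i t ∈ Uc i t (s i t))
    (hdyn : ∀ i, ∀ t < T, s i (t + 1) = π i t (s i t) (u i t))
    -- the induced MICP variable
    (m : ∀ i : Fin N, ℕ → S i × U i → ℝ)
    (hm : ∀ i t z, m i t z = if z = (s i t, u i t) then (1 : ℝ) else 0) :
    -- the feasible sets Z_i^t
    let Z : ∀ i : Fin N, ℕ → Finset (S i × U i) :=
      fun i t => Finset.univ.filter fun z => z.2 ∈ Uc i t z.1
    -- (i) integrality
    (∀ i t z, ∃ k : ℤ, m i t z = (k : ℝ)) ∧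
    -- (ii) nonnegativity and unit mass
    (∀ i t z, 0 ≤ m i t z) ∧
    (∀ i, ∀ t ≤ T, ∑ z ∈ Z i t, m i t z = 1) ∧
    -- (iii) zero mass on infeasible initial states
    (∀ i, ∀ z ∈ Z i 0, z.1 ∉ S0 i → m i 0 z = 0) ∧
    -- (iv) flow conservation
    (∀ i, ∀ θ, 1 ≤ θ → θ ≤ T → ∀ s' : S i,
      ∑ uθ ∈ Uc i θ s', m i θ (s', uθ)
        = ∑ z ∈ (Z i (θ - 1)).filter (fun z => π i (θ - 1) z.1 z.2 = s'),
            m i (θ - 1) z) ∧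
    -- objective values coincide
    (∑ t ∈ Finset.range (T + 1),
        f t ((N : ℝ)⁻¹ * ∑ i, ∑ z ∈ Z i t, h i t z.1 z.2 * m i t z)
      + (N : ℝ)⁻¹ * ∑ t ∈ Finset.range (T + 1), ∑ i, ∑ z ∈ Z i t,
          ℓ i t z.1 z.2 * m i t z
      = ∑ t ∈ Finset.range (T + 1),
          f t ((N : ℝ)⁻¹ * ∑ i, h i t (s i t) (u i t))
        + (N : ℝ)⁻¹ * ∑ i, ∑ t ∈ Finset.range (T + 1),
            ℓ i t (s i t) (u i t)) := by
  intro Z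
  -- key lemma: weighted sums over Z collapse
  have key : ∀ (i : Fin N) (t : ℕ), t ≤ T → ∀ g : S i × U i → ℝ,
      ∑ z ∈ Z i t, g z * m i t z = g (s i t, u i t) := by
    intro i t ht g
    have hmem : (s i t, u i t) ∈ Z i t := by
      simp [Z, hu i t ht]
    rw [Finset.sum_eq_single (s i t, u i t)]
    · simp [hm]
    · intro z _ hz; simp [hm, hz]
    · intro habs; exact absurd hmem habs
  refine ⟨?_, ?_, ?_, ?_, ?_, ?_⟩
  · intro i t z
    rw [hm]
    by_cases hz : z = (s i t, u i t)
    · exact ⟨1, by simp [hz]⟩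
    · exact ⟨0, by simp [hz]⟩
  · intro i t z; rw [hm]; positivity
  · intro i t ht
    have := key i t ht (fun _ => 1)
    simpa using this
  · intro i z hz hz1
    rw [hm]
    by_cases hz2 : z = (s i 0, u i 0)
    · exfalso; apply hz1; rw [hz2]; exact hs0 i
    · simp [hz2]
  · intro i θ h1 h2 s'
    obtain ⟨t, rfl⟩ : ∃ t, θ = t + 1 := ⟨θ - 1, (Nat.succ_pred_eq_of_pos h1).symm⟩
    have htT : t < T := h2
    simp only [Nat.add_sub_cancel]
    have hdynt := hdyn i t htT
    have hrhs : ∑ z ∈ (Z i t).filter (fun z => π i t z.1 z.2 = s'), m i t z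
        = if π i t (s i t) (u i t) = s' then 1 else 0 := by
      rw [Finset.sum_filter]
      have hmem : (s i t, u i t) ∈ Z i t := by
        simp [Z, hu i t (le_of_lt htT)]
      rw [Finset.sum_eq_single (s i t, u i t)]
      · simp [hm]
      · intro z _ hz; simp [hm, hz]
      · intro habs; exact absurd hmem habs
    rw [hrhs]
    by_cases hs' : s' = s i (t + 1)
    · subst hs'
      rw [if_pos hdynt.symm]
      rw [Finset.sum_eq_single (u i (t + 1))]
      · simp [hm]
      · intro b _ hb; simp [hm, hb]
      · intro habs; exact absurd (hu i (t + 1) h2) habs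
    · rw [if_neg (fun hc => hs' (by rw [← hc, ← hdynt]))]
      apply Finset.sum_eq_zero
      intro uθ _
      rw [hm, if_neg]
      intro hc
      exact hs' (congrArg Prod.fst hc)
  · have hh : ∀ t ∈ Finset.range (T + 1), ∀ i : Fin N,
        (∑ z ∈ Z i t, h i t z.1 z.2 * m i t z) = h i t (s i t) (u i t) := by
      intro t ht i
      have := key i t (Nat.lt_succ_iff.mp (Finset.mem_range.mp ht)) (fun z => h i t z.1 z.2)
      simpa using this
    have hℓ : ∀ t ∈ Finset.range (T + 1), ∀ i : Fin N,
        (∑ z ∈ Z i t, ℓ i t z.1 z.2 * m i t z) = ℓ i t (s i t) (u i t) := by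
      intro t ht i
      have := key i t (Nat.lt_succ_iff.mp (Finset.mem_range.mp ht)) (fun z => ℓ i t z.1 z.2)
      simpa using this
    rw [Finset.sum_comm (s := Finset.range (T + 1))]
    congr 1
    · apply Finset.sum_congr rfl
      intro t ht
      congr 2
      exact Finset.sum_congr rfl (fun i _ => hh t ht i)
    · congr 1
      apply Finset.sum_congr rfl
      intro i _
      exact Finset.sum_congr rfl (fun t ht => hℓ t ht i)
end

section
/- (MICP feasible points encode trajectories.) If m satisfies the MICP constraints—m_i^t(z) ∈ {0,1}, ∑_{z ∈ Z_i^t} m_i^t(z) = 1, m_i^0(s,u) = 0 whenever s ∉ S_i^0, and the flow-conservation constraint—then for each agent i and time t there is a unique pair (s_i^t, u_i^t) ∈ Z_i^t with m_i^t(s_i^t,u_i^t) = 1, and the resulting (s,u) is a feasible trajectory: s_i^0 ∈ S_i^0, u_i^t ∈ U_i^t(s_i^t), and s_i^{t+1} = π_i^t(s_i^t, u_i^t). -/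
private lemma sum01_card {α : Type*} (F : Finset α) (f : α → ℝ)
    (h : ∀ a ∈ F, f a = 0 ∨ f a = 1) :
    ∑ a ∈ F, f a = ((F.filter (fun a => f a = 1)).card : ℝ) := by
  classical
  rw [Finset.card_filter]
  push_cast
  refine Finset.sum_congr rfl fun a ha => ?_
  rcases h a ha with h0 | h1
  · simp [h0]
  · simp [h1]

theorem micp_encodes_trajectories
    {N T : ℕ}
    (S U : Fin N → Type*)
    [∀ i, Fintype (S i)] [∀ i, Fintype (U i)]
    [∀ i, DecidableEq (S i)] [∀ i, DecidableEq (U i)]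
    (Uc : ∀ i : Fin N, ℕ → S i → Finset (U i))
    (π : ∀ i : Fin N, ℕ → S i → U i → S i)
    (S0 : ∀ i : Fin N, Finset (S i))
    (m : ∀ i : Fin N, ℕ → S i × U i → ℝ)
    (Z : ∀ i : Fin N, ℕ → Finset (S i × U i))
    (hZ : ∀ i t, Z i t = Finset.univ.filter fun z => z.2 ∈ Uc i t z.1)
    -- MICP constraints
    (h01 : ∀ i t z, m i t z = 0 ∨ m i t z = 1)
    (hmass : ∀ i, ∀ t ≤ T, ∑ z ∈ Z i t, m i t z = 1)
    (hinit : ∀ i, ∀ z ∈ Z i 0, z.1 ∉ S0 i → m i 0 z = 0)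
    (hflow : ∀ i, ∀ θ, 1 ≤ θ → θ ≤ T → ∀ s' : S i,
      ∑ uθ ∈ Uc i θ s', m i θ (s', uθ)
        = ∑ z ∈ (Z i (θ - 1)).filter (fun z => π i (θ - 1) z.1 z.2 = s'),
            m i (θ - 1) z) :
    -- uniqueness of the unit-mass pair
    (∀ i, ∀ t ≤ T, ∃! z : S i × U i, z ∈ Z i t ∧ m i t z = 1) ∧
    -- the induced trajectory is feasible
    (∃ (s : ∀ i : Fin N, ℕ → S i) (u : ∀ i : Fin N, ℕ → U i),
      (∀ i, s i 0 ∈ S0 i) ∧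
      (∀ i, ∀ t ≤ T, u i t ∈ Uc i t (s i t)) ∧
      (∀ i, ∀ t < T, s i (t + 1) = π i t (s i t) (u i t)) ∧
      (∀ i, ∀ t ≤ T, m i t (s i t, u i t) = 1)) := by
  classical
  have hcard : ∀ i, ∀ t ≤ T,
      ((Z i t).filter (fun z => m i t z = 1)).card = 1 := by
    intro i t ht
    have h1 := hmass i t ht
    rw [sum01_card _ _ (fun z _ => h01 i t z)] at h1
    exact_mod_cast h1
  have key : ∀ i, ∀ t ≤ T, ∃! z : S i × U i, z ∈ Z i t ∧ m i t z = 1 := by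
    intro i t ht
    obtain ⟨z, hz⟩ := Finset.card_eq_one.mp (hcard i t ht)
    refine ⟨z, ?_, ?_⟩
    · have : z ∈ (Z i t).filter (fun z => m i t z = 1) := by
        rw [hz]; exact Finset.mem_singleton_self z
      exact Finset.mem_filter.mp this |>.imp id id
    · intro y hy
      have : y ∈ (Z i t).filter (fun z => m i t z = 1) :=
        Finset.mem_filter.mpr ⟨hy.1, hy.2⟩
      rw [hz] at this
      exact Finset.mem_singleton.mp this
  refine ⟨key, ?_⟩
  set zz : ∀ i : Fin N, ℕ → S i × U i := fun i t =>
    if h : t ≤ T then (key i t h).choose else (key i 0 (Nat.zero_le T)).choose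
    with hzzdef
  have hzz : ∀ i, ∀ t (ht : t ≤ T), zz i t ∈ Z i t ∧ m i t (zz i t) = 1 := by
    intro i t ht
    simp only [hzzdef, dif_pos ht]
    exact (key i t ht).choose_spec.1
  have hzzU : ∀ i, ∀ t (ht : t ≤ T), ∀ y : S i × U i,
      y ∈ Z i t ∧ m i t y = 1 → y = zz i t := by
    intro i t ht y hy
    simp only [hzzdef, dif_pos ht]
    exact (key i t ht).choose_spec.2 y hy
  refine ⟨fun i t => (zz i t).1, fun i t => (zz i t).2, ?_, ?_, ?_, ?_⟩
  · intro i
    by_contra hS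
    have h0 := hinit i (zz i 0) (hzz i 0 (Nat.zero_le T)).1 hS
    rw [(hzz i 0 (Nat.zero_le T)).2] at h0
    norm_num at h0
  · intro i t ht
    have hmem := (hzz i t ht).1
    rw [hZ] at hmem
    exact (Finset.mem_filter.mp hmem).2
  · intro i t ht
    have hθ1 : 1 ≤ t + 1 := Nat.le_add_left 1 t
    have hθT : t + 1 ≤ T := ht
    set s' : S i := π i t (zz i t).1 (zz i t).2 with hs'
    have hf := hflow i (t + 1) hθ1 hθT s'
    simp only [Nat.add_sub_cancel] at hf
    have htT : t ≤ T := le_of_lt ht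
    -- RHS = 1
    have hrhs : ∑ z ∈ (Z i t).filter (fun z => π i t z.1 z.2 = s'), m i t z = 1 := by
      rw [sum01_card _ _ (fun z _ => h01 i t z)]
      have hset : ((Z i t).filter (fun z => π i t z.1 z.2 = s')).filter
          (fun z => m i t z = 1) = {zz i t} := by
        apply Finset.eq_singleton_iff_unique_mem.mpr
        constructor
        · exact Finset.mem_filter.mpr ⟨Finset.mem_filter.mpr ⟨(hzz i t htT).1, rfl⟩,
            (hzz i t htT).2⟩
        · intro y hy
          have hy' := Finset.mem_filter.mp hy
          have hy'' := Finset.mem_filter.mp hy'.1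
          exact hzzU i t htT y ⟨hy''.1, hy'.2⟩
      rw [hset]
      simp
    rw [hrhs] at hf
    -- LHS = 1 gives existence of u with m (t+1) (s', u) = 1
    have hcardu : ((Uc i (t+1) s').filter (fun uθ => m i (t+1) (s', uθ) = 1)).card = 1 := by
      rw [sum01_card _ _ (fun uθ _ => h01 i (t+1) (s', uθ))] at hf
      exact_mod_cast hf
    obtain ⟨u', hu'⟩ := Finset.card_eq_one.mp hcardu
    have hu'mem : u' ∈ (Uc i (t+1) s').filter (fun uθ => m i (t+1) (s', uθ) = 1) := by
      rw [hu']; exact Finset.mem_singleton_self u'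
    have hu'' := Finset.mem_filter.mp hu'mem
    have hzmem : (s', u') ∈ Z i (t+1) := by
      rw [hZ]
      exact Finset.mem_filter.mpr ⟨Finset.mem_univ _, hu''.1⟩
    have := hzzU i (t+1) ht (s', u') ⟨hzmem, hu''.2⟩
    exact congrArg Prod.fst this.symm
  · intro i t ht
    exact (hzz i t ht).2
end
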